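/- Let A be an abelian category with a projective class P that is closed with respect to retracts (any retract of an object of P belongs to P). If P⋆ → A is a P-projective precubical resolution of A ∈ A, then the augmented chain complex N(P⋆) → A is a P-projective resolution of A in the sense of Eilenberg–Moore: every N_n(P⋆) belongs to P, and for every Q ∈ P the sequence ⋯ → Hom(Q, N_n(P⋆)) → ⋯ → Hom(Q, N_0(P⋆)) → Hom(Q, A) → 0 is exact. -/

import Mathlib

open CategoryTheory CategoryTheory.Limits
universe v u

/-- A precubical object in a category `C`. `d n i ε : X (n+1) ⟶ X n` is the face
`∂_i^ε` for `1 ≤ i ≤ n+1`; values outside this range are junk. -/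
structure Precub (C : Type u) [Category.{v} C] where
  X : ℕ → C
  d : ∀ n : ℕ, ℕ → Bool → (X (n + 1) ⟶ X n)
  dd : ∀ (n i j : ℕ) (α ε : Bool), 1 ≤ i → i < j → j ≤ n + 2 →
    d (n + 1) j ε ≫ d n i α = d (n + 1) i α ≫ d n (j - 1) ε

/-- `f` is `P`-epimorphic. -/
def PEpi {C : Type u} [Category.{v} C] (P : C → Prop) {A B : C} (f : A ⟶ B) : Prop :=
  ∀ Q : C, P Q → ∀ g : Q ⟶ B, ∃ h : Q ⟶ A, h ≫ f = g

/-- `P` is a projective class. -/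
def IsProjectiveClass {C : Type u} [Category.{v} C] (P : C → Prop) : Prop :=
  ∀ A : C, ∃ (Q : C) (e : Q ⟶ A), P Q ∧ PEpi P e

/-- The canonical factorization data of an augmented precubical object `X → A`:
`K 0` is the kernel pair of the augmentation, and `K (n+1)` is the cubical kernel of the
faces `∂_1^0, …, ∂_{n+1}^0, ∂_1^1, …, ∂_{n+1}^1 : X_{n+1} ⟶ X_n`, with
`e n : X_{n+1} ⟶ K n` the canonical morphism. -/
structure KernelData {C : Type u} [Category.{v} C] (X : Precub C) {A : C}
    (aug : X.X 0 ⟶ A) where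
  K : ℕ → C
  k : ∀ n : ℕ, ℕ → Bool → (K n ⟶ X.X n)
  e : ∀ n : ℕ, X.X (n + 1) ⟶ K n
  pair_w : k 0 1 false ≫ aug = k 0 1 true ≫ aug
  pair_univ : ∀ {D : C} (h₀ h₁ : D ⟶ X.X 0), h₀ ≫ aug = h₁ ≫ aug →
    ∃! l : D ⟶ K 0, l ≫ k 0 1 false = h₀ ∧ l ≫ k 0 1 true = h₁
  ck_w : ∀ (n i j : ℕ) (ω α : Bool), 1 ≤ i → i < j → j ≤ n + 2 →
    k (n + 1) j α ≫ X.d n i ω = k (n + 1) i ω ≫ X.d n (j - 1) α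
  ck_univ : ∀ (n : ℕ) {D : C} (h : ℕ → Bool → (D ⟶ X.X (n + 1))),
    (∀ (i j : ℕ) (ω α : Bool), 1 ≤ i → i < j → j ≤ n + 2 →
      h j α ≫ X.d n i ω = h i ω ≫ X.d n (j - 1) α) →
    ∃! l : D ⟶ K (n + 1), ∀ (i : ℕ) (ω : Bool), 1 ≤ i → i ≤ n + 2 →
      l ≫ k (n + 1) i ω = h i ω
  e_k : ∀ (n i : ℕ) (ε : Bool), 1 ≤ i → i ≤ n + 1 → e n ≫ k n i ε = X.d n i ε

/-- Data exhibiting `K` as the normalized chain complex `N(X)` of a precubical object `X`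
in an abelian category: `K_n` is the intersection of the kernels of the faces `∂_i^1`
with differential the (restricted) alternating sum `Σ (-1)^(i+1) ∂_i^0`. -/
structure NormalizedData {C : Type u} [Category.{v} C] [Abelian C] (X : Precub C) where
  K : ChainComplex C ℕ
  ι : ∀ n, K.X n ⟶ X.X n
  ι_mono : ∀ n, Mono (ι n)
  ι_ker : ∀ (n i : ℕ), 1 ≤ i → i ≤ n + 1 → ι (n + 1) ≫ X.d n i true = 0
  ι_lift : ∀ (n : ℕ) {W : C} (g : W ⟶ X.X (n + 1)),
    (∀ i, 1 ≤ i → i ≤ n + 1 → g ≫ X.d n i true = 0) →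
    ∃ l : W ⟶ K.X (n + 1), l ≫ ι (n + 1) = g
  ι_lift₀ : ∀ {W : C} (g : W ⟶ X.X 0), ∃ l : W ⟶ K.X 0, l ≫ ι 0 = g
  diff : ∀ n : ℕ, K.d (n + 1) n ≫ ι n =
    ι (n + 1) ≫ ∑ i ∈ Finset.Icc 1 (n + 1), ((-1 : ℤ) ^ (i + 1)) • X.d n i false

set_option linter.unusedSectionVars false
set_option linter.unusedVariables false

namespace Stmt17


variable {C : Type u} [Category.{v} C] [Abelian C]
variable {P : C → Prop} {X : Precub C} {A : C} {aug : X.X 0 ⟶ A}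

/-- Normalized elements: all `∂^1`-faces vanish (resp. the augmentation vanishes). -/
def Norm (X : Precub C) (aug : X.X 0 ⟶ A) {Q : C} : ∀ n : ℕ, (Q ⟶ X.X n) → Prop
  | 0, g => g ≫ aug = 0
  | (k+1), g => ∀ i, 1 ≤ i → i ≤ k + 1 → g ≫ X.d k i true = 0

lemma norm_zero {Q : C} (n : ℕ) : Norm X aug n (0 : Q ⟶ X.X n) := by
  cases n <;> simp [Norm]

lemma norm_add {Q : C} {n : ℕ} {f g : Q ⟶ X.X n} (hf : Norm X aug n f)
    (hg : Norm X aug n g) : Norm X aug n (f + g) := by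
  cases n with
  | zero =>
    simp only [Norm] at *
    rw [Preadditive.add_comp, hf, hg, add_zero]
  | succ k =>
    intro i h1 h2
    rw [Preadditive.add_comp, hf i h1 h2, hg i h1 h2, add_zero]

lemma norm_zsmul {Q : C} {n : ℕ} (c : ℤ) {f : Q ⟶ X.X n} (hf : Norm X aug n f) :
    Norm X aug n (c • f) := by
  cases n with
  | zero =>
    simp only [Norm] at *
    rw [Preadditive.zsmul_comp, hf, smul_zero]
  | succ k =>
    intro i h1 h2
    rw [Preadditive.zsmul_comp, hf i h1 h2, smul_zero]

lemma norm_sum {Q : C} {n : ℕ} {J : Type} (s : Finset J) (f : J → (Q ⟶ X.X n))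
    (h : ∀ j ∈ s, Norm X aug n (f j)) : Norm X aug n (∑ j ∈ s, f j) := by
  classical
  induction s using Finset.induction with
  | empty => simpa using norm_zero n
  | insert _ _ hj ih =>
    rw [Finset.sum_insert hj]
    exact norm_add (h _ (Finset.mem_insert_self _ _))
      (ih fun j hjs => h j (Finset.mem_insert_of_mem hjs))

lemma norm_face (haug : X.d 0 1 false ≫ aug = X.d 0 1 true ≫ aug) {Q : C} {n : ℕ}
    {g : Q ⟶ X.X (n+1)} (hg : Norm X aug (n+1) g) (j : ℕ) (h1 : 1 ≤ j) (h2 : j ≤ n+1) :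
    Norm X aug n (g ≫ X.d n j false) := by
  cases n with
  | zero =>
    obtain rfl : j = 1 := by omega
    show (g ≫ X.d 0 1 false) ≫ aug = 0
    rw [Category.assoc, haug, ← Category.assoc, hg 1 le_rfl le_rfl, zero_comp]
  | succ m =>
    intro i hi1 hi2
    rcases lt_or_ge i j with hij | hij
    · rw [Category.assoc, X.dd m i j true false hi1 hij (by omega), ← Category.assoc,
        hg i hi1 (by omega), zero_comp]
    · have hdd := X.dd m j (i+1) false true h1 (by omega) (by omega)
      rw [Category.assoc,
        show X.d (m+1) j false ≫ X.d m i true = X.d (m+1) (i+1) true ≫ X.d m j false from by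
          simpa using hdd.symm,
        ← Category.assoc, hg (i+1) (by omega) (by omega), zero_comp]

/-- Box-filling from the resolution structure, dimension ≥ 2. -/
lemma fill (KD : KernelData X aug) (he : ∀ m, PEpi P (KD.e m)) {Q : C} (hQ : P Q) (n : ℕ)
    (c : ℕ → Bool → (Q ⟶ X.X (n+1)))
    (hc : ∀ i j ω α, 1 ≤ i → i < j → j ≤ n + 2 →
      c j α ≫ X.d n i ω = c i ω ≫ X.d n (j-1) α) :
    ∃ z : Q ⟶ X.X (n+2), ∀ i ε, 1 ≤ i → i ≤ n + 2 → z ≫ X.d (n+1) i ε = c i ε := by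
  obtain ⟨l, hl, -⟩ := KD.ck_univ n c hc
  obtain ⟨z, hz⟩ := he (n+1) Q hQ l
  refine ⟨z, fun i ε h1 h2 => ?_⟩
  rw [← KD.e_k (n+1) i ε h1 h2, ← Category.assoc, hz]
  exact hl i ε h1 h2

/-- Box-filling in dimension 1. -/
lemma fill0 (KD : KernelData X aug) (he : ∀ m, PEpi P (KD.e m)) {Q : C} (hQ : P Q)
    (h₀ h₁ : Q ⟶ X.X 0) (w : h₀ ≫ aug = h₁ ≫ aug) :
    ∃ z : Q ⟶ X.X 1, z ≫ X.d 0 1 false = h₀ ∧ z ≫ X.d 0 1 true = h₁ := by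
  obtain ⟨l, ⟨hl0, hl1⟩, -⟩ := KD.pair_univ h₀ h₁ w
  obtain ⟨z, hz⟩ := he 0 Q hQ l
  refine ⟨z, ?_, ?_⟩
  · rw [← KD.e_k 0 1 false le_rfl le_rfl, ← Category.assoc, hz, hl0]
  · rw [← KD.e_k 0 1 true le_rfl le_rfl, ← Category.assoc, hz, hl1]


/-- The defining properties of the cone operator `s` at level `n`:
`s 0 = 0`, `s g` is normalized and has first face `g`. -/
def SProp (X : Precub C) (aug : X.X 0 ⟶ A) {Q : C} (n : ℕ)
    (s : (Q ⟶ X.X n) → (Q ⟶ X.X (n+1))) : Prop :=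
  s 0 = 0 ∧ ∀ g, Norm X aug n g →
    Norm X aug (n+1) (s g) ∧ s g ≫ X.d n 1 false = g

/-- Linking of cone operators at consecutive levels: the higher faces of `s g`
are `s` of the faces of `g`. -/
def SLink (X : Precub C) (aug : X.X 0 ⟶ A) {Q : C} (n : ℕ)
    (sa : (Q ⟶ X.X n) → (Q ⟶ X.X (n+1)))
    (sb : (Q ⟶ X.X (n+1)) → (Q ⟶ X.X (n+2))) : Prop :=
  ∀ g, Norm X aug (n+1) g → ∀ i, 2 ≤ i → i ≤ n + 2 →
    sb g ≫ X.d (n+1) i false = sa (g ≫ X.d n (i-1) false)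

lemma Spair (haug : X.d 0 1 false ≫ aug = X.d 0 1 true ≫ aug) {Q : C} (M : ℕ)
    (sM : (Q ⟶ X.X M) → (Q ⟶ X.X (M+1))) (sM1 : (Q ⟶ X.X (M+1)) → (Q ⟶ X.X (M+2)))
    (hlink : SLink X aug M sM sM1) :
    ∀ g : Q ⟶ X.X (M+2), Norm X aug (M+2) g → ∀ i j, 2 ≤ i → i < j → j ≤ M+3 →
      sM1 (g ≫ X.d (M+1) (j-1) false) ≫ X.d (M+1) i false
        = sM1 (g ≫ X.d (M+1) (i-1) false) ≫ X.d (M+1) (j-1) false := by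
  intro g hg i j h2i hij hj
  have hNu1 : Norm X aug (M+1) (g ≫ X.d (M+1) (j-1) false) :=
    norm_face haug hg (j-1) (by omega) (by omega)
  have hNu2 : Norm X aug (M+1) (g ≫ X.d (M+1) (i-1) false) :=
    norm_face haug hg (i-1) (by omega) (by omega)
  rw [hlink _ hNu1 i h2i (by omega), hlink _ hNu2 (j-1) (by omega) (by omega)]
  congr 1
  rw [Category.assoc, Category.assoc,
    X.dd M (i-1) (j-1) false false (by omega) (by omega) (by omega)]

/-- One construction step for the cone operator. -/
lemma Sstep (haug : X.d 0 1 false ≫ aug = X.d 0 1 true ≫ aug)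
    (KD : KernelData X aug) (he : ∀ m, PEpi P (KD.e m)) {Q : C} (hQ : P Q) (N : ℕ)
    (sN : (Q ⟶ X.X N) → (Q ⟶ X.X (N+1))) (hN : SProp X aug N sN)
    (hpair : ∀ g : Q ⟶ X.X (N+1), Norm X aug (N+1) g → ∀ i j, 2 ≤ i → i < j → j ≤ N+2 →
      sN (g ≫ X.d N (j-1) false) ≫ X.d N i false
        = sN (g ≫ X.d N (i-1) false) ≫ X.d N (j-1) false) :
    ∃ sb : (Q ⟶ X.X (N+1)) → (Q ⟶ X.X (N+2)),
      SProp X aug (N+1) sb ∧ SLink X aug N sN sb := by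
  classical
  have hfill : ∀ g : Q ⟶ X.X (N+1), Norm X aug (N+1) g →
      ∃ z : Q ⟶ X.X (N+2), ∀ i ε, 1 ≤ i → i ≤ N+2 → z ≫ X.d (N+1) i ε =
        (bif ε then 0 else if i = 1 then g else sN (g ≫ X.d N (i-1) false)) := by
    intro g hg
    apply fill KD he hQ N
    intro i j ω α h1 h2 h3
    have hj1 : j ≠ 1 := by omega
    have hnuj : Norm X aug N (g ≫ X.d N (j-1) false) :=
      norm_face haug hg (j-1) (by omega) (by omega)
    cases α with
    | true =>
      simp only [Bool.cond_true]
      rw [zero_comp]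
      cases ω with
      | true => simp only [Bool.cond_true]; rw [zero_comp]
      | false =>
        simp only [Bool.cond_false]
        by_cases hi : i = 1
        · subst hi; rw [if_pos rfl]
          exact (hg (j-1) (by omega) (by omega)).symm
        · rw [if_neg hi]
          have hnu : Norm X aug N (g ≫ X.d N (i-1) false) :=
            norm_face haug hg (i-1) (by omega) (by omega)
          exact ((hN.2 _ hnu).1 (j-1) (by omega) (by omega)).symm
    | false =>
      simp only [Bool.cond_false]
      rw [if_neg hj1]
      cases ω with
      | true =>
        simp only [Bool.cond_true]
        rw [zero_comp, (hN.2 _ hnuj).1 i h1 (by omega)]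
      | false =>
        simp only [Bool.cond_false]
        by_cases hi : i = 1
        · subst hi; rw [if_pos rfl]
          exact (hN.2 _ hnuj).2
        · rw [if_neg hi]
          exact hpair g hg i j (by omega) h2 h3
  refine ⟨fun g => if h : Norm X aug (N+1) g ∧ g ≠ 0 then (hfill g h.1).choose else 0,
    ⟨?_, ?_⟩, ?_⟩
  · dsimp only
    rw [dif_neg (by simp)]
  · intro g hg
    by_cases h0 : g = 0
    · subst h0
      dsimp only
      rw [dif_neg (by simp)]
      exact ⟨norm_zero _, by rw [zero_comp]⟩
    · dsimp only
      rw [dif_pos ⟨hg, h0⟩]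
      constructor
      · intro i h1 h2
        rw [(hfill g hg).choose_spec i true h1 h2]
        simp
      · rw [(hfill g hg).choose_spec 1 false le_rfl (by omega)]
        simp
  · intro g hg i h2 hi
    by_cases h0 : g = 0
    · subst h0
      dsimp only
      rw [dif_neg (by simp), zero_comp, zero_comp, hN.1]
    · dsimp only
      rw [dif_pos ⟨hg, h0⟩, (hfill g hg).choose_spec i false (by omega) hi]
      simp only [Bool.cond_false]
      rw [if_neg (by omega : ¬ i = 1)]

lemma Sglue {Q : C} (Nmax : ℕ) (s : ∀ n, (Q ⟶ X.X n) → (Q ⟶ X.X (n+1)))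
    (h1 : ∀ n, n ≤ Nmax → SProp X aug n (s n))
    (h2 : ∀ n, n + 1 ≤ Nmax → SLink X aug n (s n) (s (n+1)))
    (sb : (Q ⟶ X.X (Nmax+1)) → (Q ⟶ X.X (Nmax+2)))
    (hb : SProp X aug (Nmax+1) sb) (hbl : SLink X aug Nmax (s Nmax) sb) :
    ∃ s' : ∀ n, (Q ⟶ X.X n) → (Q ⟶ X.X (n+1)),
      (∀ n, n ≤ Nmax+1 → SProp X aug n (s' n)) ∧
      (∀ n, n + 1 ≤ Nmax+1 → SLink X aug n (s' n) (s' (n+1))) := by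
  classical
  refine ⟨Function.update s (Nmax+1) sb, ?_, ?_⟩
  · intro n hn
    rcases eq_or_lt_of_le hn with rfl | hlt
    · rw [Function.update_self]; exact hb
    · rw [Function.update_of_ne (by omega)]; exact h1 n (by omega)
  · intro n hn
    rcases eq_or_lt_of_le hn with heq | hlt
    · obtain rfl : n = Nmax := by omega
      rw [Function.update_self, Function.update_of_ne (by omega)]
      exact hbl
    · rw [Function.update_of_ne (by omega), Function.update_of_ne (by omega)]
      exact h2 n (by omega)

/-- Existence of the cone operator family up to any level. -/
lemma Sex (haug : X.d 0 1 false ≫ aug = X.d 0 1 true ≫ aug)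
    (KD : KernelData X aug) (he : ∀ m, PEpi P (KD.e m)) {Q : C} (hQ : P Q) :
    ∀ Nmax : ℕ,
    ∃ s : ∀ n, (Q ⟶ X.X n) → (Q ⟶ X.X (n+1)),
      (∀ n, n ≤ Nmax → SProp X aug n (s n)) ∧
      (∀ n, n + 1 ≤ Nmax → SLink X aug n (s n) (s (n+1)))
  | 0 => by
    classical
    have hfill : ∀ g : Q ⟶ X.X 0, g ≫ aug = 0 →
        ∃ z : Q ⟶ X.X 1, z ≫ X.d 0 1 false = g ∧ z ≫ X.d 0 1 true = 0 :=
      fun g hg => fill0 KD he hQ g 0 (by rw [hg, zero_comp])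
    refine ⟨Function.update (fun n (_ : Q ⟶ X.X n) => (0 : Q ⟶ X.X (n+1))) 0
      (fun g => if h : (g ≫ aug = 0) ∧ g ≠ 0 then (hfill g h.1).choose else 0), ?_, ?_⟩
    · intro n hn
      obtain rfl : n = 0 := by omega
      rw [Function.update_self]
      constructor
      · dsimp only
        rw [dif_neg (by simp)]
      · intro g hg
        have hg' : g ≫ aug = 0 := hg
        by_cases h0 : g = 0
        · subst h0
          dsimp only
          rw [dif_neg (by simp)]
          exact ⟨norm_zero _, by rw [zero_comp]⟩
        · dsimp only
          rw [dif_pos ⟨hg', h0⟩]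
          refine ⟨?_, (hfill g hg').choose_spec.1⟩
          intro i h1 h2
          obtain rfl : i = 1 := le_antisymm h2 h1
          exact (hfill g hg').choose_spec.2
    · intro n hn; omega
  | (Nmax+1) => by
    obtain ⟨s, hS, hL⟩ := Sex haug KD he hQ Nmax
    have hpair : ∀ g : Q ⟶ X.X (Nmax+1), Norm X aug (Nmax+1) g →
        ∀ i j, 2 ≤ i → i < j → j ≤ Nmax+2 →
        s Nmax (g ≫ X.d Nmax (j-1) false) ≫ X.d Nmax i false
          = s Nmax (g ≫ X.d Nmax (i-1) false) ≫ X.d Nmax (j-1) false := by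
      cases Nmax with
      | zero => intro g hg i j h2i hij hj; omega
      | succ M => exact Spair haug M (s M) (s (M+1)) (hL M (by omega))
    obtain ⟨sb, hb, hbl⟩ := Sstep haug KD he hQ Nmax (s Nmax) (hS Nmax le_rfl) hpair
    exact Sglue Nmax s hS hL sb hb hbl


/-! ### Degeneracy operators -/

/-- The prescribed boundary of the `k`-th degeneracy at level `n+1`. -/
def cb (X : Precub C) (n : ℕ) (σa : ℕ → (X.X n ⟶ X.X (n+1))) (k i : ℕ) (ε : Bool) :
    X.X (n+1) ⟶ X.X (n+1) :=
  if i < k then X.d n i ε ≫ σa (k-1) else if i = k then 𝟙 _ else X.d n (i-1) ε ≫ σa k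

/-- `σ k` has both its `k`-th faces equal to the identity. -/
def DProp (X : Precub C) (n : ℕ) (σ : ℕ → (X.X n ⟶ X.X (n+1))) : Prop :=
  ∀ k ε, 1 ≤ k → k ≤ n+1 → σ k ≫ X.d n k ε = 𝟙 _

/-- Cubical degeneracy face relations linking two consecutive levels. -/
def DLink (X : Precub C) (n : ℕ) (σa : ℕ → (X.X n ⟶ X.X (n+1)))
    (σb : ℕ → (X.X (n+1) ⟶ X.X (n+2))) : Prop :=
  ∀ k i ε, 1 ≤ k → k ≤ n+2 → 1 ≤ i → i ≤ n+2 →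
    (i < k → σb k ≫ X.d (n+1) i ε = X.d n i ε ≫ σa (k-1)) ∧
    (k < i → σb k ≫ X.d (n+1) i ε = X.d n (i-1) ε ≫ σa k)

lemma Dcompat0 (σa : ℕ → (X.X 0 ⟶ X.X 1)) (hD : DProp X 0 σa) :
    ∀ k, 1 ≤ k → k ≤ 2 → ∀ i j ω α, 1 ≤ i → i < j → j ≤ 2 →
      cb X 0 σa k j α ≫ X.d 0 i ω = cb X 0 σa k i ω ≫ X.d 0 (j-1) α := by
  intro k hk1 hk2 i j ω α h1 h2 h3
  obtain rfl : i = 1 := by omega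
  obtain rfl : j = 2 := by omega
  interval_cases k
  · have h := hD 1 ω le_rfl le_rfl
    simp only [cb, if_neg (by omega : ¬ (2:ℕ) < 1), if_neg (by omega : ¬ (2:ℕ) = 1),
      if_neg (by omega : ¬ (1:ℕ) < 1), if_pos rfl, if_true]
    rw [show (2:ℕ) - 1 = 1 from rfl, Category.assoc, h, Category.comp_id, Category.id_comp]
  · have h := hD 1 α le_rfl le_rfl
    simp only [cb, if_neg (by omega : ¬ (2:ℕ) < 2), if_pos rfl, if_true,
      if_pos (by omega : (1:ℕ) < 2)]
    rw [show (2:ℕ) - 1 = 1 from rfl, Category.id_comp, Category.assoc, h, Category.comp_id]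

lemma Dcompat (M : ℕ) (σp : ℕ → (X.X M ⟶ X.X (M+1))) (σa : ℕ → (X.X (M+1) ⟶ X.X (M+2)))
    (hDa : DProp X (M+1) σa) (hL : DLink X M σp σa) :
    ∀ k, 1 ≤ k → k ≤ M+3 → ∀ i j ω α, 1 ≤ i → i < j → j ≤ M+3 →
      cb X (M+1) σa k j α ≫ X.d (M+1) i ω = cb X (M+1) σa k i ω ≫ X.d (M+1) (j-1) α := by
  intro k hk1 hk2 i j ω α h1 h2 h3
  rcases lt_trichotomy j k with hjk | rfl | hkj
  · -- A : i < j < k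
    have hik : i < k := by omega
    simp only [cb, if_pos hjk, if_pos hik]
    rw [Category.assoc, ((hL (k-1) i ω (by omega) (by omega) h1 (by omega)).1 (by omega)),
      Category.assoc, ((hL (k-1) (j-1) α (by omega) (by omega) (by omega) (by omega)).1 (by omega)),
      ← Category.assoc, ← Category.assoc, X.dd M i j ω α h1 h2 (by omega)]
  · -- B : j = k
    simp only [cb, if_neg (lt_irrefl j), if_pos rfl, if_pos h2, if_true]
    rw [Category.id_comp, Category.assoc, hDa (j-1) α (by omega) (by omega), Category.comp_id]
  · rcases lt_trichotomy i k with hik | rfl | hki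
    · -- C : i < k < j
      simp only [cb, if_neg (by omega : ¬ j < k), if_neg (by omega : ¬ j = k), if_pos hik]
      rw [Category.assoc, ((hL k i ω (by omega) (by omega) h1 (by omega)).1 hik),
        Category.assoc, ((hL (k-1) (j-1) α (by omega) (by omega) (by omega) (by omega)).2 (by omega)),
        ← Category.assoc, ← Category.assoc, X.dd M i (j-1) ω α h1 (by omega) (by omega)]
    · -- D : i = k < j
      simp only [cb, if_neg (by omega : ¬ j < i), if_neg (by omega : ¬ j = i),
        if_neg (lt_irrefl i), if_pos rfl, if_true]
      rw [Category.assoc, hDa i ω (by omega) (by omega), Category.comp_id, Category.id_comp]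
    · -- E : k < i < j
      simp only [cb, if_neg (by omega : ¬ j < k), if_neg (by omega : ¬ j = k),
        if_neg (by omega : ¬ i < k), if_neg (by omega : ¬ i = k)]
      rw [Category.assoc, ((hL k i ω (by omega) (by omega) h1 (by omega)).2 hki),
        Category.assoc, ((hL k (j-1) α (by omega) (by omega) (by omega) (by omega)).2 (by omega)),
        ← Category.assoc, ← Category.assoc,
        X.dd M (i-1) (j-1) ω α (by omega) (by omega) (by omega)]

lemma Dstep (KD : KernelData X aug) (he : ∀ m, PEpi P (KD.e m)) (hproj : ∀ m, P (X.X m))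
    (n : ℕ) (σa : ℕ → (X.X n ⟶ X.X (n+1)))
    (hcompat : ∀ k, 1 ≤ k → k ≤ n+2 → ∀ i j ω α, 1 ≤ i → i < j → j ≤ n+2 →
      cb X n σa k j α ≫ X.d n i ω = cb X n σa k i ω ≫ X.d n (j-1) α) :
    ∃ σb : ℕ → (X.X (n+1) ⟶ X.X (n+2)), DProp X (n+1) σb ∧ DLink X n σa σb := by
  classical
  have hfill : ∀ k, 1 ≤ k → k ≤ n+2 → ∃ z : X.X (n+1) ⟶ X.X (n+2),
      ∀ i ε, 1 ≤ i → i ≤ n+2 → z ≫ X.d (n+1) i ε = cb X n σa k i ε :=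
    fun k h1 h2 => fill KD he (hproj (n+1)) n (cb X n σa k) (hcompat k h1 h2)
  refine ⟨fun k => if h : 1 ≤ k ∧ k ≤ n+2 then (hfill k h.1 h.2).choose else 0, ?_, ?_⟩
  · intro k ε h1 h2
    dsimp only
    rw [dif_pos ⟨h1, h2⟩, (hfill k h1 h2).choose_spec k ε h1 h2]
    simp [cb]
  · intro k i ε h1 h2 h3 h4
    constructor
    · intro hik
      dsimp only
      rw [dif_pos ⟨h1, h2⟩, (hfill k h1 h2).choose_spec i ε h3 h4]
      simp only [cb, if_pos hik]
    · intro hki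
      dsimp only
      rw [dif_pos ⟨h1, h2⟩, (hfill k h1 h2).choose_spec i ε h3 h4]
      simp only [cb, if_neg (by omega : ¬ i < k), if_neg (by omega : ¬ i = k)]

lemma Dglue (Nmax : ℕ) (σ : ∀ n, ℕ → (X.X n ⟶ X.X (n+1)))
    (h1 : ∀ n, n ≤ Nmax → DProp X n (σ n)) (h2 : ∀ n, n+1 ≤ Nmax → DLink X n (σ n) (σ (n+1)))
    (σb : ℕ → (X.X (Nmax+1) ⟶ X.X (Nmax+2)))
    (hb : DProp X (Nmax+1) σb) (hbl : DLink X Nmax (σ Nmax) σb) :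
    ∃ σ' : ∀ n, ℕ → (X.X n ⟶ X.X (n+1)),
      (∀ n, n ≤ Nmax+1 → DProp X n (σ' n)) ∧
      (∀ n, n+1 ≤ Nmax+1 → DLink X n (σ' n) (σ' (n+1))) := by
  classical
  refine ⟨Function.update σ (Nmax+1) σb, ?_, ?_⟩
  · intro n hn
    rcases eq_or_lt_of_le hn with rfl | hlt
    · rw [Function.update_self]; exact hb
    · rw [Function.update_of_ne (by omega)]; exact h1 n (by omega)
  · intro n hn
    rcases eq_or_lt_of_le hn with heq | hlt
    · obtain rfl : n = Nmax := by omega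
      rw [Function.update_self, Function.update_of_ne (by omega)]
      exact hbl
    · rw [Function.update_of_ne (by omega), Function.update_of_ne (by omega)]
      exact h2 n (by omega)

/-- Existence of degeneracy operators up to any level. -/
lemma Dex (KD : KernelData X aug) (he : ∀ m, PEpi P (KD.e m)) (hproj : ∀ m, P (X.X m)) :
    ∀ Nmax : ℕ,
    ∃ σ : ∀ n, ℕ → (X.X n ⟶ X.X (n+1)),
      (∀ n, n ≤ Nmax → DProp X n (σ n)) ∧
      (∀ n, n+1 ≤ Nmax → DLink X n (σ n) (σ (n+1)))
  | 0 => by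
    classical
    have hfill : ∃ z : X.X 0 ⟶ X.X 1, z ≫ X.d 0 1 false = 𝟙 _ ∧ z ≫ X.d 0 1 true = 𝟙 _ :=
      fill0 KD he (hproj 0) (𝟙 _) (𝟙 _) rfl
    refine ⟨Function.update (fun n (_ : ℕ) => (0 : X.X n ⟶ X.X (n+1))) 0
      (fun _ => hfill.choose), ?_, ?_⟩
    · intro n hn
      obtain rfl : n = 0 := by omega
      rw [Function.update_self]
      intro k ε h1 h2
      obtain rfl : k = 1 := le_antisymm h2 h1
      cases ε
      · exact hfill.choose_spec.1
      · exact hfill.choose_spec.2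
    · intro n hn; omega
  | (Nmax+1) => by
    obtain ⟨σ, hD, hL⟩ := Dex KD he hproj Nmax
    have hcompat : ∀ k, 1 ≤ k → k ≤ Nmax+2 → ∀ i j ω α, 1 ≤ i → i < j → j ≤ Nmax+2 →
        cb X Nmax (σ Nmax) k j α ≫ X.d Nmax i ω
          = cb X Nmax (σ Nmax) k i ω ≫ X.d Nmax (j-1) α := by
      cases Nmax with
      | zero => exact Dcompat0 (σ 0) (hD 0 le_rfl)
      | succ M => exact Dcompat M (σ M) (σ (M+1)) (hD (M+1) le_rfl) (hL M (by omega))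
    obtain ⟨σb, hb, hbl⟩ := Dstep KD he hproj Nmax (σ Nmax) hcompat
    exact Dglue Nmax σ hD hL σb hb hbl

/-! ### The normalization retraction -/

/-- Iterated normalizer `(𝟙 - e₁)(𝟙 - e₂)⋯`. -/
def Fret (X : Precub C) (n : ℕ) (σn : ℕ → (X.X n ⟶ X.X (n+1))) : ℕ → (X.X (n+1) ⟶ X.X (n+1))
  | 0 => 𝟙 _
  | (k+1) => Fret X n σn k ≫ (𝟙 _ - X.d n (k+1) true ≫ σn (k+1))

lemma Fret_face0 (σ0 : ℕ → (X.X 0 ⟶ X.X 1)) (hD : DProp X 0 σ0) :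
    Fret X 0 σ0 1 ≫ X.d 0 1 true = 0 := by
  show (Fret X 0 σ0 0 ≫ (𝟙 _ - X.d 0 1 true ≫ σ0 1)) ≫ X.d 0 1 true = 0
  rw [Category.assoc, Preadditive.sub_comp, Category.id_comp, Category.assoc,
    hD 1 true le_rfl le_rfl, Category.comp_id, sub_self, comp_zero]

lemma Fret_face (m : ℕ) (σp : ℕ → (X.X m ⟶ X.X (m+1))) (σn : ℕ → (X.X (m+1) ⟶ X.X (m+2)))
    (hD : DProp X (m+1) σn) (hL : DLink X m σp σn) :
    ∀ k, k ≤ m+2 → ∀ j, 1 ≤ j → j ≤ k → Fret X (m+1) σn k ≫ X.d (m+1) j true = 0 := by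
  intro k
  induction k with
  | zero => intro _ j h1 h2; omega
  | succ k ih =>
    intro hk j h1 h2
    show (Fret X (m+1) σn k ≫ (𝟙 _ - X.d (m+1) (k+1) true ≫ σn (k+1))) ≫ X.d (m+1) j true = 0
    rw [Category.assoc, Preadditive.sub_comp, Category.id_comp, Category.assoc,
      Preadditive.comp_sub]
    rcases eq_or_lt_of_le h2 with rfl | hjk
    · rw [hD (k+1) true (by omega) (by omega), Category.comp_id, sub_self]
    · have hface : σn (k+1) ≫ X.d (m+1) j true = X.d m j true ≫ σp k := by
        have := (hL (k+1) j true (by omega) (by omega) h1 (by omega)).1 (by omega)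
        simpa using this
      have hdd : X.d (m+1) (k+1) true ≫ X.d m j true = X.d (m+1) j true ≫ X.d m k true := by
        simpa using X.dd m j (k+1) true true h1 hjk (by omega)
      have hterm : X.d (m+1) (k+1) true ≫ σn (k+1) ≫ X.d (m+1) j true
          = X.d (m+1) j true ≫ (X.d m k true ≫ σp k) := by
        rw [hface, ← Category.assoc, hdd, Category.assoc]
      rw [hterm, ← Category.assoc, ih (by omega) j h1 (by omega), zero_comp, sub_zero]

/-- The normalization retraction at positive levels. -/
lemma retractN (KD : KernelData X aug) (he : ∀ m, PEpi P (KD.e m)) (hproj : ∀ m, P (X.X m))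
    (ND : NormalizedData X) (n : ℕ) :
    ∃ φ : X.X (n+1) ⟶ X.X (n+1),
      (∀ j, 1 ≤ j → j ≤ n+1 → φ ≫ X.d n j true = 0) ∧ ND.ι (n+1) ≫ φ = ND.ι (n+1) := by
  obtain ⟨σ, hD, hL⟩ := Dex KD he hproj n
  refine ⟨Fret X n (σ n) (n+1), ?_, ?_⟩
  · intro j h1 h2
    cases n with
    | zero =>
      obtain rfl : j = 1 := le_antisymm h2 h1
      exact Fret_face0 (σ 0) (hD 0 le_rfl)
    | succ m =>
      exact Fret_face m (σ m) (σ (m+1)) (hD (m+1) le_rfl) (hL m (by omega)) (m+2) le_rfl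
        j h1 h2
  · have key : ∀ k, k ≤ n+1 → ND.ι (n+1) ≫ Fret X n (σ n) k = ND.ι (n+1) := by
      intro k
      induction k with
      | zero => intro _; exact Category.comp_id _
      | succ k ih =>
        intro hk
        show ND.ι (n+1) ≫ (Fret X n (σ n) k ≫ (𝟙 _ - X.d n (k+1) true ≫ σ n (k+1)))
          = ND.ι (n+1)
        rw [← Category.assoc, ih (by omega), Preadditive.comp_sub, Category.comp_id,
          ← Category.assoc, ND.ι_ker n (k+1) (by omega) hk, zero_comp, sub_zero]
    exact key (n+1) le_rfl

/-! ### The alternating face sum -/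

/-- The alternating sum of the `∂^0`-faces. -/
def Dsum (X : Precub C) {Q : C} (m : ℕ) (v : Q ⟶ X.X (m+1)) : Q ⟶ X.X m :=
  ∑ i ∈ Finset.Icc 1 (m+1), ((-1 : ℤ) ^ (i+1)) • (v ≫ X.d m i false)

lemma Dsum_zero {Q : C} (m : ℕ) : Dsum X m (0 : Q ⟶ X.X (m+1)) = 0 := by
  simp [Dsum]

lemma Dsum_add {Q : C} (m : ℕ) (v w : Q ⟶ X.X (m+1)) :
    Dsum X m (v + w) = Dsum X m v + Dsum X m w := by
  simp [Dsum, Preadditive.add_comp, smul_add, Finset.sum_add_distrib]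

lemma Dsum_sub {Q : C} (m : ℕ) (v w : Q ⟶ X.X (m+1)) :
    Dsum X m (v - w) = Dsum X m v - Dsum X m w := by
  simp [Dsum, Preadditive.sub_comp, smul_sub, Finset.sum_sub_distrib]

/-- Bridge between the `N`-differential and the alternating face sum. -/
lemma bridge (ND : NormalizedData X) {Q : C} (m : ℕ) (g : Q ⟶ ND.K.X (m+1)) :
    Dsum X m (g ≫ ND.ι (m+1)) = g ≫ ND.K.d (m+1) m ≫ ND.ι m := by
  rw [ND.diff m]
  simp only [Dsum, Preadditive.comp_sum, Preadditive.comp_zsmul, Category.assoc]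

lemma norm_of_lift (ND : NormalizedData X) {Q : C} (m : ℕ) (g : Q ⟶ ND.K.X (m+1)) :
    Norm X aug (m+1) (g ≫ ND.ι (m+1)) := by
  intro i h1 h2
  rw [Category.assoc, ND.ι_ker m i h1 h2, comp_zero]

lemma Icc_split (n : ℕ) : Finset.Icc 1 (n+2) = insert 1 (Finset.Icc 2 (n+2)) := by
  ext a
  simp only [Finset.mem_Icc, Finset.mem_insert]
  omega

lemma sum_shift {M : Type*} [AddCommGroup M] (n : ℕ) (F : ℕ → M) :
    (∑ i ∈ Finset.Icc 2 (n+2), ((-1:ℤ)^(i+1)) • F (i-1))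
      = -∑ m ∈ Finset.Icc 1 (n+1), ((-1:ℤ)^(m+1)) • F m := by
  have hneg : -∑ m ∈ Finset.Icc 1 (n+1), ((-1:ℤ)^(m+1)) • F m
      = ∑ m ∈ Finset.Icc 1 (n+1), -(((-1:ℤ)^(m+1)) • F m) := by
    rw [Finset.sum_neg_distrib]
  rw [hneg]
  refine Finset.sum_nbij' (fun i => i - 1) (fun m => m + 1) ?_ ?_ ?_ ?_ ?_
  · intro a ha; simp only [Finset.mem_Icc] at *; omega
  · intro a ha; simp only [Finset.mem_Icc] at *; omega
  · intro a ha; simp only [Finset.mem_Icc] at ha; omega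
  · intro a ha; simp only [Finset.mem_Icc] at ha; omega
  · intro a ha
    simp only [Finset.mem_Icc] at ha
    obtain ⟨b, rfl⟩ : ∃ b, a = b + 2 := ⟨a - 2, by omega⟩
    show ((-1:ℤ)^(b+2+1)) • F (b+2-1) = -(((-1:ℤ)^(b+2-1+1)) • F (b+2-1))
    rw [show b+2-1 = b+1 from rfl, show b+2+1 = (b+1+1)+1 from rfl, pow_succ,
      mul_neg_one, neg_smul]

/-- The key correction operator. -/
def Phi (X : Precub C) {Q : C} (n : ℕ) (sn : (Q ⟶ X.X n) → (Q ⟶ X.X (n+1)))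
    (v : Q ⟶ X.X (n+1)) : Q ⟶ X.X (n+1) :=
  ∑ m ∈ Finset.Icc 1 (n+1), ((-1:ℤ)^(m+1)) • sn (v ≫ X.d n m false)

lemma Phi_norm (haug : X.d 0 1 false ≫ aug = X.d 0 1 true ≫ aug) {Q : C} (n : ℕ)
    (sn : (Q ⟶ X.X n) → (Q ⟶ X.X (n+1))) (hsn : SProp X aug n sn)
    (v : Q ⟶ X.X (n+1)) (hv : Norm X aug (n+1) v) :
    Norm X aug (n+1) (Phi X n sn v) := by
  refine norm_sum _ _ fun m hm => ?_
  simp only [Finset.mem_Icc] at hm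
  exact norm_zsmul _ ((hsn.2 _ (norm_face haug hv m hm.1 hm.2)).1)

/-- The fundamental identity `D(s v) = v - Φ v`. -/
lemma star (haug : X.d 0 1 false ≫ aug = X.d 0 1 true ≫ aug) {Q : C} (n : ℕ)
    (sn : (Q ⟶ X.X n) → (Q ⟶ X.X (n+1))) (sn1 : (Q ⟶ X.X (n+1)) → (Q ⟶ X.X (n+2)))
    (hsn1 : SProp X aug (n+1) sn1) (hlink : SLink X aug n sn sn1)
    (v : Q ⟶ X.X (n+1)) (hv : Norm X aug (n+1) v) :
    Dsum X (n+1) (sn1 v) = v - Phi X n sn v := by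
  rw [Dsum, Icc_split n, Finset.sum_insert (by simp)]
  rw [(hsn1.2 v hv).2]
  have : ∀ i ∈ Finset.Icc 2 (n+2), ((-1:ℤ)^(i+1)) • (sn1 v ≫ X.d (n+1) i false)
      = ((-1:ℤ)^(i+1)) • sn (v ≫ X.d n (i-1) false) := by
    intro i hi
    simp only [Finset.mem_Icc] at hi
    rw [hlink v hv i hi.1 hi.2]
  rw [Finset.sum_congr rfl this, sum_shift n (fun m => sn (v ≫ X.d n m false))]
  norm_num
  abel

lemma Phi_face1 {Q : C} (haug : X.d 0 1 false ≫ aug = X.d 0 1 true ≫ aug) (n : ℕ)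
    (sn : (Q ⟶ X.X n) → (Q ⟶ X.X (n+1))) (hsn : SProp X aug n sn)
    (v : Q ⟶ X.X (n+1)) (hv : Norm X aug (n+1) v) :
    Phi X n sn v ≫ X.d n 1 false = Dsum X n v := by
  rw [Phi, Preadditive.sum_comp, Dsum]
  refine Finset.sum_congr rfl fun m hm => ?_
  simp only [Finset.mem_Icc] at hm
  rw [Preadditive.zsmul_comp, (hsn.2 _ (norm_face haug hv m hm.1 hm.2)).2]

lemma Phi_face_high {Q : C} (haug : X.d 0 1 false ≫ aug = X.d 0 1 true ≫ aug) (n' : ℕ)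
    (sp : (Q ⟶ X.X n') → (Q ⟶ X.X (n'+1)))
    (sn : (Q ⟶ X.X (n'+1)) → (Q ⟶ X.X (n'+2)))
    (hsp0 : sp 0 = 0) (hlink : SLink X aug n' sp sn)
    (v : Q ⟶ X.X (n'+2)) (hv : Norm X aug (n'+2) v)
    (k : ℕ) (hvlow : ∀ m, 1 ≤ m → m ≤ k → v ≫ X.d (n'+1) m false = 0)
    (i : ℕ) (h2 : 2 ≤ i) (hik : i ≤ k+1) (hin : i ≤ n'+2) :
    Phi X (n'+1) sn v ≫ X.d (n'+1) i false = 0 := by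
  rw [Phi, Preadditive.sum_comp]
  refine Finset.sum_eq_zero fun m hm => ?_
  simp only [Finset.mem_Icc] at hm
  rw [Preadditive.zsmul_comp,
    hlink _ (norm_face haug hv m hm.1 hm.2) i h2 hin]
  suffices h : (v ≫ X.d (n'+1) m false) ≫ X.d n' (i-1) false = 0 by
    rw [h, hsp0, smul_zero]
  rcases le_or_gt m (i-1) with hmi | hmi
  · rw [hvlow m hm.1 (by omega), zero_comp]
  · rw [Category.assoc, X.dd n' (i-1) m false false (by omega) hmi (by omega),
      ← Category.assoc, hvlow (i-1) (by omega) (by omega), zero_comp]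


/-- Core exactness: every normalized cycle is the boundary of a normalized element. -/
lemma exact_core (haug : X.d 0 1 false ≫ aug = X.d 0 1 true ≫ aug)
    (KD : KernelData X aug) (he : ∀ m, PEpi P (KD.e m)) {Q : C} (hQ : P Q) (n : ℕ)
    (DD : ∀ w : Q ⟶ X.X (n+2), Norm X aug (n+2) w → Dsum X n (Dsum X (n+1) w) = 0)
    (x : Q ⟶ X.X (n+1)) (hx : Norm X aug (n+1) x) (hcyc : Dsum X n x = 0) :
    ∃ z : Q ⟶ X.X (n+2), Norm X aug (n+2) z ∧ Dsum X (n+1) z = x := by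
  obtain ⟨s, hS, hL⟩ := Sex haug KD he hQ (n+1)
  have hSn := hS n (by omega)
  have hSn1 := hS (n+1) le_rfl
  have hLn := hL n le_rfl
  have iter : ∀ k, k ≤ n+1 → ∃ (z : Q ⟶ X.X (n+2)) (w : Q ⟶ X.X (n+1)),
      Norm X aug (n+2) z ∧ Norm X aug (n+1) w ∧ Dsum X n w = 0 ∧
      (∀ m, 1 ≤ m → m ≤ k → w ≫ X.d n m false = 0) ∧ x = Dsum X (n+1) z + w := by
    intro k
    induction k with
    | zero =>
      intro _
      exact ⟨0, x, norm_zero _, hx, hcyc, fun m h1 h2 => by omega,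
        by rw [Dsum_zero, zero_add]⟩
    | succ k ih =>
      intro hk1
      obtain ⟨z, w, hz, hw, hDw, hwlow, hxzw⟩ := ih (by omega)
      have hstar := star haug n (s n) (s (n+1)) hSn1 hLn w hw
      refine ⟨z + s (n+1) w, Phi X n (s n) w, ?_, ?_, ?_, ?_, ?_⟩
      · exact norm_add hz (hSn1.2 w hw).1
      · exact Phi_norm haug n (s n) hSn w hw
      · have hPhi_eq : Phi X n (s n) w = w - Dsum X (n+1) (s (n+1) w) := by
          rw [hstar]; abel
        rw [hPhi_eq, Dsum_sub, hDw, DD (s (n+1) w) (hSn1.2 w hw).1, sub_zero]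
      · intro m h1 h2
        rcases Nat.lt_or_ge m 2 with hm | hm
        · obtain rfl : m = 1 := by omega
          rw [Phi_face1 haug n (s n) hSn w hw, hDw]
        · obtain ⟨n', rfl⟩ : ∃ n', n = n'+1 := ⟨n-1, by omega⟩
          exact Phi_face_high haug n' (s n') (s (n'+1)) (hS n' (by omega)).1
            (hL n' (by omega)) w hw k hwlow m hm (by omega) (by omega)
      · rw [hxzw, Dsum_add, hstar]
        abel
  obtain ⟨z, w, hz, hw, hDw, hwlow, hxzw⟩ := iter (n+1) le_rfl
  have hPhi0 : Phi X n (s n) w = 0 := by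
    refine Finset.sum_eq_zero fun m hm => ?_
    simp only [Finset.mem_Icc] at hm
    rw [hwlow m hm.1 hm.2, hSn.1, smul_zero]
  have hstar := star haug n (s n) (s (n+1)) hSn1 hLn w hw
  rw [hPhi0, sub_zero] at hstar
  refine ⟨z + s (n+1) w, norm_add hz (hSn1.2 w hw).1, ?_⟩
  rw [Dsum_add, hstar, ← hxzw]

end Stmt17

open Stmt17 in
/-- Data exhibiting `K` as the Moore chain complex `M(X)` of a precubical object `X`
in an abelian category. -/

theorem stmt17 {C : Type u} [Category.{v} C] [Abelian C] (P : C → Prop)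
    (hP : IsProjectiveClass P)
    (hretract : ∀ (Y Z : C) (r : Y ⟶ Z) (σ : Z ⟶ Y), σ ≫ r = 𝟙 Z → P Y → P Z)
    (X : Precub C) {A : C} (aug : X.X 0 ⟶ A)
    (haug : X.d 0 1 false ≫ aug = X.d 0 1 true ≫ aug)
    (KD : KernelData X aug)
    (hproj : ∀ n, P (X.X n))
    (hexact : PEpi P aug ∧ ∀ n, PEpi P (KD.e n))
    (ND : NormalizedData X) :
    (∀ n, P (ND.K.X n)) ∧
    (ND.K.d 1 0 ≫ ND.ι 0 ≫ aug = 0) ∧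
    ∀ Q : C, P Q →
      (∀ g : Q ⟶ A, ∃ l : Q ⟶ ND.K.X 0, l ≫ ND.ι 0 ≫ aug = g) ∧
      (∀ g : Q ⟶ ND.K.X 0, g ≫ ND.ι 0 ≫ aug = 0 →
        ∃ l : Q ⟶ ND.K.X 1, l ≫ ND.K.d 1 0 = g) ∧
      (∀ (n : ℕ) (g : Q ⟶ ND.K.X (n + 1)), g ≫ ND.K.d (n + 1) n = 0 →
        ∃ l : Q ⟶ ND.K.X (n + 2), l ≫ ND.K.d (n + 2) (n + 1) = g) := by
  obtain ⟨hepi, he⟩ := hexact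
  have hsum0 : (∑ i ∈ Finset.Icc 1 (0 + 1), ((-1 : ℤ) ^ (i + 1)) • X.d 0 i false)
      = X.d 0 1 false := by
    rw [show Finset.Icc 1 (0 + 1) = {1} from Finset.Icc_self 1, Finset.sum_singleton]
    norm_num
  refine ⟨?_, ?_, ?_⟩
  · intro n
    cases n with
    | zero =>
      obtain ⟨l, hl⟩ := ND.ι_lift₀ (𝟙 (X.X 0))
      haveI := ND.ι_mono 0
      have hret : ND.ι 0 ≫ l = 𝟙 _ := by
        rw [← cancel_mono (ND.ι 0), Category.assoc, hl, Category.comp_id, Category.id_comp]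
      exact hretract (X.X 0) (ND.K.X 0) l (ND.ι 0) hret (hproj 0)
    | succ n =>
      obtain ⟨φ, hφ1, hφ2⟩ := retractN KD he hproj ND n
      obtain ⟨l, hl⟩ := ND.ι_lift n φ hφ1
      haveI := ND.ι_mono (n+1)
      have hret : ND.ι (n+1) ≫ l = 𝟙 _ := by
        rw [← cancel_mono (ND.ι (n+1)), Category.assoc, hl, hφ2, Category.id_comp]
      exact hretract (X.X (n+1)) (ND.K.X (n+1)) l (ND.ι (n+1)) hret (hproj (n+1))
  · rw [← Category.assoc, ND.diff 0, hsum0, Category.assoc, haug, ← Category.assoc,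
      ND.ι_ker 0 1 le_rfl le_rfl, zero_comp]
  · intro Q hQ
    refine ⟨?_, ?_, ?_⟩
    · intro g
      obtain ⟨h, hh⟩ := hepi Q hQ g
      obtain ⟨l, hl⟩ := ND.ι_lift₀ h
      exact ⟨l, by rw [← Category.assoc, hl, hh]⟩
    · intro g hg
      obtain ⟨l, ⟨hl1, hl2⟩, -⟩ := KD.pair_univ (g ≫ ND.ι 0) 0
        (by rw [Category.assoc, hg, zero_comp])
      obtain ⟨h₁, hh₁⟩ := he 0 Q hQ l
      have hf : h₁ ≫ X.d 0 1 false = g ≫ ND.ι 0 := by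
        rw [← KD.e_k 0 1 false le_rfl le_rfl, ← Category.assoc, hh₁, hl1]
      have ht : h₁ ≫ X.d 0 1 true = 0 := by
        rw [← KD.e_k 0 1 true le_rfl le_rfl, ← Category.assoc, hh₁, hl2]
      obtain ⟨l', hl'⟩ := ND.ι_lift 0 h₁ (fun i h1 h2 => by
        obtain rfl : i = 1 := le_antisymm h2 h1
        exact ht)
      haveI := ND.ι_mono 0
      refine ⟨l', ?_⟩
      rw [← cancel_mono (ND.ι 0), Category.assoc, ND.diff 0, hsum0, ← Category.assoc,
        hl', hf]
    · intro n g hg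
      have DD : ∀ w : Q ⟶ X.X (n+2), Norm X aug (n+2) w →
          Dsum X n (Dsum X (n+1) w) = 0 := by
        intro w hw
        obtain ⟨l, hl⟩ := ND.ι_lift (n+1) w (fun i h1 h2 => hw i h1 h2)
        have hdd : ND.K.d (n+1+1) (n+1) ≫ ND.K.d (n+1) n = 0 :=
          HomologicalComplex.d_comp_d _ _ _ _
        rw [← hl, bridge ND (n+1) l, ← Category.assoc,
          bridge ND n (l ≫ ND.K.d (n+1+1) (n+1)), Category.assoc,
          ← Category.assoc (ND.K.d (n+1+1) (n+1)) (ND.K.d (n+1) n) (ND.ι n), hdd,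
          zero_comp, comp_zero]
      have hx : Norm X aug (n+1) (g ≫ ND.ι (n+1)) := norm_of_lift ND n g
      have hcyc : Dsum X n (g ≫ ND.ι (n+1)) = 0 := by
        rw [bridge ND n g, ← Category.assoc, hg, zero_comp]
      obtain ⟨z, hzn, hzd⟩ := exact_core haug KD he hQ n DD (g ≫ ND.ι (n+1)) hx hcyc
      obtain ⟨l, hl⟩ := ND.ι_lift (n+1) z (fun i h1 h2 => hzn i h1 h2)
      haveI := ND.ι_mono (n+1)
      refine ⟨l, ?_⟩
      have hb := bridge ND (n+1) l
      rw [hl, hzd] at hb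
      refine (cancel_mono (ND.ι (n+1))).1 ?_
      rw [Category.assoc]
      exact hb.symm
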